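/- Let X be a real Hausdorff topological vector space, D ⊆ X a nonempty convex set, n ≥ 1 a natural number, and E₁,…,Eₙ generalized deviation functions on D. Then for every x = (x₁,…,xₙ) ∈ Dⁿ there exists a unique y ∈ conv{x₁,…,xₙ} such that (E₁(x₁,y) + ⋯ + Eₙ(xₙ,y))(xᵢ − y) ≤ 0 for every i ∈ {1,…,n}. (Thus the generalized E-deviation mean D^E(x) is well defined.) -/

import Mathlib

open Finset

lemma matrix_game_aux {ι : Type*} [Fintype ι] [Nonempty ι] [DecidableEq ι]
    (a : ι → ι → ℝ) (ha : ∀ k j, a k j + a j k ≤ 0) :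
    ∃ p : ι → ℝ, (∀ k, 0 ≤ p k) ∧ (∑ k, p k) = 1 ∧ ∀ k, ∑ j, a k j * p j ≤ 0 := by
  by_contra hcon
  push_neg at hcon
  -- the linear map p ↦ (k ↦ ∑ j, a k j * p j)
  set T : (ι → ℝ) →ₗ[ℝ] (ι → ℝ) :=
    LinearMap.pi (fun k => ∑ j, a k j • LinearMap.proj j) with hTdef
  have hT : ∀ p k, T p k = ∑ j, a k j * p j := by
    intro p k
    simp [hTdef, LinearMap.pi_apply, LinearMap.sum_apply, LinearMap.smul_apply,
      LinearMap.proj_apply, smul_eq_mul]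
  set C : Set (ι → ℝ) := T '' stdSimplex ℝ ι with hCdef
  set N : Set (ι → ℝ) := {w | ∀ k, w k ≤ 0} with hNdef
  have hdisj : Disjoint C N := by
    rw [Set.disjoint_left]
    rintro w ⟨p, hp, rfl⟩ hwN
    obtain ⟨k, hk⟩ := hcon p hp.1 hp.2
    have := hwN k
    rw [hT] at this
    linarith
  have hTc : Continuous T := T.continuous_of_finiteDimensional
  have hCc : IsCompact C := (isCompact_stdSimplex ℝ ι).image hTc
  have hCconv : Convex ℝ C := (convex_stdSimplex ℝ ι).linear_image T
  have hNc : IsClosed N := by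
    have : N = ⋂ k, {w : ι → ℝ | w k ≤ 0} := by
      ext w; simp [hNdef, Set.mem_iInter]
    rw [this]
    exact isClosed_iInter fun k => isClosed_le (continuous_apply k) continuous_const
  have hNconv : Convex ℝ N := by
    intro w hw w' hw' s t hs ht hst k
    have h1 := hw k
    have h2 := hw' k
    simp only [Pi.add_apply, Pi.smul_apply, smul_eq_mul]
    nlinarith
  obtain ⟨f, u, v, hfC, huv, hfN⟩ :=
    geometric_hahn_banach_compact_closed hCconv hCc hNconv hNc hdisj
  have hv0 : v < 0 := by
    have h0N : (0 : ι → ℝ) ∈ N := fun k => le_refl 0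
    have := hfN 0 h0N
    simpa using this
  set e : ι → ι → ℝ := fun k j => if k = j then 1 else 0 with hedef
  set q : ι → ℝ := fun k => f (e k) with hqdef
  have hq : ∀ k, q k ≤ 0 := by
    intro k
    by_contra h
    push_neg at h
    set s : ℝ := (|v| + 1) / q k with hsdef
    have hs : 0 < s := div_pos (by positivity) h
    have hmem : -(s • e k) ∈ N := by
      intro j
      simp only [Pi.neg_apply, Pi.smul_apply, smul_eq_mul, hedef]
      by_cases hkj : k = j <;> simp [hkj] <;> nlinarith
    have hthis := hfN _ hmem
    rw [map_neg, map_smul, smul_eq_mul] at hthis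
    have hfek : f (e k) = q k := rfl
    rw [hfek] at hthis
    have hsq : s * q k = |v| + 1 := by
      rw [hsdef, div_mul_cancel₀ _ (ne_of_gt h)]
    rw [hsq] at hthis
    have := neg_abs_le v
    linarith
  have hrep : ∀ w : ι → ℝ, f w = ∑ k, w k * q k := by
    intro w
    conv_lhs => rw [pi_eq_sum_univ w]
    rw [map_sum]
    exact Finset.sum_congr rfl fun k _ => by rw [map_smul, smul_eq_mul]
  set r : ι → ℝ := fun k => -q k with hrdef
  have hr : ∀ k, 0 ≤ r k := fun k => neg_nonneg.2 (hq k)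
  set S : ℝ := ∑ k, r k with hSdef
  -- a point of C
  set p₀ : ι → ℝ := fun _ => (Fintype.card ι : ℝ)⁻¹ with hp₀def
  have hcard : 0 < (Fintype.card ι : ℝ) := by
    exact_mod_cast Fintype.card_pos
  have hp₀ : p₀ ∈ stdSimplex ℝ ι :=
    ⟨fun k => by positivity, by
      simp [hp₀def, Finset.sum_const, nsmul_eq_mul, mul_inv_cancel₀ hcard.ne']⟩
  have hfneg : ∀ c ∈ C, f c < 0 := fun c hc => lt_trans (lt_trans (hfC c hc) huv) hv0
  have hSpos : 0 < S := by
    rcases (Finset.sum_nonneg fun k _ => hr k).lt_or_eq with h | h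
    · exact h
    · exfalso
      have hall : ∀ k ∈ Finset.univ, r k = 0 :=
        (Finset.sum_eq_zero_iff_of_nonneg fun k _ => hr k).1 h.symm
      have hq0 : ∀ k, q k = 0 := fun k => by
        have := hall k (Finset.mem_univ k); rw [hrdef] at this; simpa using this
      have : f (T p₀) = 0 := by
        rw [hrep]; exact Finset.sum_eq_zero fun k _ => by rw [hq0, mul_zero]
      have := hfneg (T p₀) ⟨p₀, hp₀, rfl⟩
      linarith
  set p : ι → ℝ := fun k => r k / S with hpdef
  have hpmem : p ∈ stdSimplex ℝ ι :=
    ⟨fun k => div_nonneg (hr k) hSpos.le, by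
      rw [hpdef, ← Finset.sum_div, ← hSdef, div_self hSpos.ne']⟩
  set Q : ℝ := ∑ k, ∑ j, a k j * r j * r k with hQdef
  have hQ : Q ≤ 0 := by
    have hswap : Q = ∑ k, ∑ j, a j k * r k * r j := by
      rw [hQdef]; exact Finset.sum_comm
    have h2 : Q + Q = ∑ k, ∑ j, (a k j + a j k) * (r j * r k) := by
      nth_rewrite 2 [hswap]
      rw [hQdef, ← Finset.sum_add_distrib]
      refine Finset.sum_congr rfl fun k _ => ?_
      rw [← Finset.sum_add_distrib]
      exact Finset.sum_congr rfl fun j _ => by ring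
    have h3 : ∑ k, ∑ j, (a k j + a j k) * (r j * r k) ≤ 0 :=
      Finset.sum_nonpos fun k _ => Finset.sum_nonpos fun j _ =>
        mul_nonpos_of_nonpos_of_nonneg (ha k j) (mul_nonneg (hr j) (hr k))
    linarith
  have hfc : f (T p) = -(Q / S) := by
    rw [hrep]
    have : ∀ k, T p k * q k = -((∑ j, a k j * r j * r k) / S) := by
      intro k
      rw [hT]
      have hqr : q k = -r k := by rw [hrdef]; ring
      rw [hqr, Finset.sum_div, Finset.sum_mul, ← Finset.sum_neg_distrib]
      refine Finset.sum_congr rfl fun j _ => ?_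
      simp only [hpdef]
      ring
    rw [Finset.sum_congr rfl fun k _ => this k, Finset.sum_neg_distrib,
      ← Finset.sum_div, ← hQdef]
  have h1 := hfneg (T p) ⟨p, hpmem, rfl⟩
  rw [hfc] at h1
  have : Q / S ≤ 0 := div_nonpos_of_nonpos_of_nonneg hQ hSpos.le
  linarith

open Finset Set


/-- Generalized deviation means are well defined: for generalized deviations
`E₁,…,Eₙ` on a convex set `D` and `x ∈ Dⁿ` there is a unique `y ∈ conv{x₁,…,xₙ}` with
`(E₁(x₁,y) + ⋯ + Eₙ(xₙ,y))(xᵢ − y) ≤ 0` for all `i`. -/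
theorem generalized_deviation_mean_well_defined
    {X : Type*} [AddCommGroup X] [Module ℝ X] [TopologicalSpace X]
    [IsTopologicalAddGroup X] [ContinuousSMul ℝ X] [T2Space X]
    (D : Set X) (hD : D.Nonempty) (hDconv : Convex ℝ D)
    (n : ℕ) (hn : 0 < n)
    (E : Fin n → X → X → X →L[ℝ] ℝ)
    (hE0 : ∀ i, ∀ u ∈ D, E i u u = 0)
    (hEcont : ∀ i, ∀ u ∈ D, ∀ h : X, ContinuousOn (fun v => E i u v h) D)
    (hEmono : ∀ i, ∀ u ∈ D, ∀ v ∈ D, ∀ w ∈ D, v ≠ w → (E i u v - E i u w) (v - w) < 0)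
    (x : Fin n → X) (hx : ∀ i, x i ∈ D) :
    ∃! y, y ∈ convexHull ℝ (Set.range x) ∧
      ∀ i, (∑ j, E j (x j) y) (x i - y) ≤ 0 := by
  classical
  haveI : Nonempty (Fin n) := Fin.pos_iff_nonempty.mp hn
  set K : Set X := convexHull ℝ (Set.range x) with hKdef
  have hxK : ∀ i, x i ∈ K := fun i => subset_convexHull ℝ _ ⟨i, rfl⟩
  have hKD : K ⊆ D := convexHull_min (Set.range_subset_iff.2 hx) hDconv
  have hKconv : Convex ℝ K := convex_convexHull ℝ _
  have hKcomp : IsCompact K := (Set.finite_range x).isCompact_convexHull (𝕜 := ℝ)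
  have hKne : K.Nonempty := ⟨x ⟨0, hn⟩, hxK _⟩
  set Φ : X → X →L[ℝ] ℝ := fun v => ∑ j, E j (x j) v with hΦdef
  have hΦapp : ∀ v h, Φ v h = ∑ j, E j (x j) v h := by
    intro v h; simp [hΦdef, ContinuousLinearMap.sum_apply]
  have hmonos : ∀ v ∈ D, ∀ w ∈ D, v ≠ w → Φ v (v - w) - Φ w (v - w) < 0 := by
    intro v hv w hw hvw
    have : ∀ j : Fin n, (E j (x j) v - E j (x j) w) (v - w) < 0 := fun j =>
      hEmono j (x j) (hx j) v hv w hw hvw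
    have hsum := Finset.sum_lt_sum_of_nonempty Finset.univ_nonempty
      (fun j (_ : j ∈ Finset.univ) => this j)
    simp only [Finset.sum_const_zero] at hsum
    rw [hΦapp, hΦapp, ← Finset.sum_sub_distrib]
    simpa [ContinuousLinearMap.sub_apply] using hsum
  have hmono : ∀ v ∈ D, ∀ w ∈ D, Φ v (v - w) - Φ w (v - w) ≤ 0 := by
    intro v hv w hw
    by_cases hvw : v = w
    · subst hvw; simp
    · exact (hmonos v hv w hw hvw).le
  have hcont : ∀ h : X, ContinuousOn (fun v => Φ v h) D := by
    intro h
    have : (fun v => Φ v h) = fun v => ∑ j, E j (x j) v h := by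
      funext v; exact hΦapp v h
    rw [this]
    exact continuousOn_finset_sum _ fun j _ => hEcont j (x j) (hx j) h
  -- Minty sets
  set t : K → Set X := fun z => {y | Φ z ((z : X) - y) ≤ 0} with htdef
  have htc : ∀ z : K, IsClosed (t z) := by
    intro z
    have : t z = (fun y => Φ z ((z : X) - y)) ⁻¹' Set.Iic 0 := rfl
    rw [this]
    exact IsClosed.preimage ((Φ z).continuous.comp (continuous_const.sub continuous_id))
      isClosed_Iic
  have hFIP : ∀ u : Finset K, (K ∩ ⋂ z ∈ u, t z).Nonempty := by
    intro u
    rcases u.eq_empty_or_nonempty with rfl | hune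
    · simpa using hKne
    · obtain ⟨z₀, hz₀⟩ := hune
      haveI : Nonempty {z : K // z ∈ u} := ⟨⟨z₀, hz₀⟩⟩
      set c : {z : K // z ∈ u} → X := fun k => ((k : K) : X) with hcdef
      have hcD : ∀ k, c k ∈ D := fun k => hKD (k : K).2
      set a : {z : K // z ∈ u} → {z : K // z ∈ u} → ℝ :=
        fun k j => -(Φ (c k) (c j - c k)) with hadef
      have ha : ∀ k j, a k j + a j k ≤ 0 := by
        intro k j
        have h := hmono (c k) (hcD k) (c j) (hcD j)
        have e1 : Φ (c k) (c j - c k) = -(Φ (c k) (c k - c j)) := by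
          rw [← map_neg]; congr 1; abel
        have e2 : Φ (c j) (c k - c j) = -(Φ (c j) (c j - c k))  := by
          rw [← map_neg]; congr 1; abel
        simp only [hadef]
        have : -(Φ (c k) (c j - c k)) + -(Φ (c j) (c k - c j))
            = Φ (c k) (c k - c j) - Φ (c j) (c k - c j) := by
          rw [e1, e2]; ring
        rw [this]
        exact h
      obtain ⟨p, hp0, hp1, hple⟩ := matrix_game_aux a ha
      set y : X := ∑ k, p k • c k with hydef
      have hyK : y ∈ K :=
        hKconv.sum_mem (fun k _ => hp0 k) hp1 (fun k _ => (k : K).2)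
      refine ⟨y, hyK, ?_⟩
      rw [Set.mem_iInter₂]
      intro z hz
      show Φ z ((z : X) - y) ≤ 0
      set k₀ : {z : K // z ∈ u} := ⟨z, hz⟩ with hk₀def
      have hzc : (z : X) = c k₀ := rfl
      have hΦy : Φ z y = ∑ k, p k * Φ z (c k) := by
        rw [hydef, map_sum]
        exact Finset.sum_congr rfl fun k _ => by rw [map_smul, smul_eq_mul]
      have hΦz : Φ z (z : X) = ∑ k, p k * Φ z (z : X) := by
        rw [← Finset.sum_mul, hp1, one_mul]
      have : Φ z ((z : X) - y) = ∑ k, a k₀ k * p k := by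
        rw [map_sub, hΦy, hΦz, ← Finset.sum_sub_distrib]
        refine Finset.sum_congr rfl fun k _ => ?_
        have : a k₀ k = Φ z (z : X) - Φ z (c k) := by
          rw [hadef]
          simp only
          rw [hzc, map_sub]
          ring
        rw [this]
        ring
      rw [this]
      exact hple k₀
  obtain ⟨y, hyK, hyT⟩ := hKcomp.inter_iInter_nonempty t htc hFIP
  rw [Set.mem_iInter] at hyT
  have hyD : y ∈ D := hKD hyK
  -- Minty's trick
  have hMinty : ∀ z ∈ K, Φ y (z - y) ≤ 0 := by
    intro z hz
    set g : ℝ → X := fun s => y + s • (z - y) with hgdef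
    have hgK : ∀ s ∈ Set.Icc (0:ℝ) 1, g s ∈ K := by
      intro s hs
      have h := hKconv hyK hz (by linarith [hs.2] : (0:ℝ) ≤ 1 - s) hs.1 (by ring)
      have : (1 - s) • y + s • z = g s := by
        rw [hgdef]; simp only; rw [smul_sub, sub_smul, one_smul]; abel
      rwa [this] at h
    have h1 : ∀ s ∈ Set.Ioc (0:ℝ) 1, Φ (g s) (z - y) ≤ 0 := by
      intro s hs
      have hgsK : g s ∈ K := hgK s ⟨hs.1.le, hs.2⟩
      have hmem := hyT ⟨g s, hgsK⟩
      have : Φ (g s) (g s - y) ≤ 0 := hmem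
      have hgsy : g s - y = s • (z - y) := by
        simp only [hgdef]; rw [add_sub_cancel_left]
      rw [hgsy, map_smul, smul_eq_mul] at this
      nlinarith [hs.1]
    have hg0 : g 0 = y := by rw [hgdef]; simp
    have hcw : ContinuousWithinAt (fun s => Φ (g s) (z - y)) (Set.Ioc (0:ℝ) 1) 0 := by
      have hgc : Continuous g := by
        rw [hgdef]; exact continuous_const.add (continuous_id.smul continuous_const)
      have hf : ContinuousWithinAt (fun v => Φ v (z - y)) D y :=
        (hcont (z - y)) y hyD
      have : ContinuousWithinAt (fun v => Φ v (z - y)) D (g 0) := by rwa [hg0]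
      exact this.comp (hgc.continuousWithinAt) (fun s hs => hKD (hgK s ⟨hs.1.le, hs.2⟩))
    haveI : (nhdsWithin (0:ℝ) (Set.Ioc 0 1)).NeBot := by
      rw [nhdsWithin_Ioc_eq_nhdsGT (by norm_num : (0:ℝ) < 1)]
      infer_instance
    have h0 : Φ (g 0) (z - y) ≤ 0 :=
      le_of_tendsto hcw (Filter.eventually_of_mem self_mem_nhdsWithin h1)
    rwa [hg0] at h0
  refine ⟨y, ⟨hyK, fun i => hMinty (x i) (hxK i)⟩, ?_⟩
  rintro y' ⟨hy'K, hy'⟩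
  by_contra hne
  have hy'D : y' ∈ D := hKD hy'K
  -- any solution w satisfies Φ w (c - w) ≤ 0 for all c ∈ K
  have hsol : ∀ w ∈ K, (∀ i, Φ w (x i - w) ≤ 0) → ∀ c ∈ K, Φ w (c - w) ≤ 0 := by
    intro w hw hwi c hc
    have hconvA : Convex ℝ {c | Φ w c ≤ Φ w w} :=
      convex_halfSpace_le ⟨fun a b => map_add _ a b, fun r a => map_smul _ r a⟩ _
    have hsub : Set.range x ⊆ {c | Φ w c ≤ Φ w w} := by
      rintro _ ⟨i, rfl⟩
      have := hwi i
      rw [map_sub] at this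
      simpa [sub_nonpos] using this
    have hKA : K ⊆ {c | Φ w c ≤ Φ w w} := convexHull_min hsub hconvA
    have := hKA hc
    rw [map_sub]
    simpa [sub_nonpos] using this
  have h1 : Φ y (y' - y) ≤ 0 := hsol y hyK (fun i => hMinty (x i) (hxK i)) y' hy'K
  have h2 : Φ y' (y - y') ≤ 0 := hsol y' hy'K hy' y hyK
  have h3 := hmonos y' hy'D y hyD hne
  have e1 : Φ y' (y' - y) = -(Φ y' (y - y')) := by rw [← map_neg]; congr 1; abel
  have e2 : Φ y (y' - y) = -(Φ y (y - y')) := by rw [← map_neg]; congr 1; abel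
  rw [e1] at h3
  have e3 : Φ y (y' - y) = -(Φ y (y - y')) := e2
  linarith [e2 ▸ h1]
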